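/- arXiv:2103.13194 — 11 statements merged into one kernel-verified Lean document; each statement's English description precedes it below -/
import Mathlib

section
/- Let X ∈ ℝ^{n×n} be any symmetric matrix. For every s ∈ ℂ such that both sI_n − A and −sI_n − A are invertible (after casting A entrywise to ℂ), the Popov function satisfies the factorization G(s) + G(−s)ᵀ = [((−sI_n − A)⁻¹B)ᵀ, I_m] · W(X) · [((sI_n − A)⁻¹B)ᵀ, I_m]ᵀ, i.e., writing T(s) = [(sI_n − A)⁻¹B; I_m] ∈ ℂ^{(n+m)×m} (stacked blocks), one has G(s) + G(−s)ᵀ = T(−s)ᵀ · W(X) · T(s), where W(X) is cast entrywise to ℂ and ᵀ denotes the (non-conjugate) transpose. -/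
open Matrix

/-- The transfer function `G(s) = C (sI - A)⁻¹ B + D`, with real matrices cast to `ℂ`. -/
noncomputable def transferFun {n m p : ℕ} (A : Matrix (Fin n) (Fin n) ℝ)
    (B : Matrix (Fin n) (Fin m) ℝ) (C : Matrix (Fin p) (Fin n) ℝ)
    (D : Matrix (Fin p) (Fin m) ℝ) (s : ℂ) : Matrix (Fin p) (Fin m) ℂ :=
  C.map Complex.ofReal * (s • 1 - A.map Complex.ofReal)⁻¹ * B.map Complex.ofReal +
    D.map Complex.ofReal

/-- The KYP matrix `W(X)`. -/
def KYP {n m : ℕ} (A : Matrix (Fin n) (Fin n) ℝ) (B : Matrix (Fin n) (Fin m) ℝ)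
    (C : Matrix (Fin m) (Fin n) ℝ) (D : Matrix (Fin m) (Fin m) ℝ)
    (X : Matrix (Fin n) (Fin n) ℝ) : Matrix (Fin n ⊕ Fin m) (Fin n ⊕ Fin m) ℝ :=
  Matrix.fromBlocks (-(Aᵀ * X) - X * A) (Cᵀ - X * B) (C - Bᵀ * X) (D + Dᵀ)

/-- The stacked block matrix `T(s) = [(sI - A)⁻¹ B ; I_m]`. -/
noncomputable def stackT {n m : ℕ} (A : Matrix (Fin n) (Fin n) ℝ)
    (B : Matrix (Fin n) (Fin m) ℝ) (s : ℂ) : Matrix (Fin n ⊕ Fin m) (Fin m) ℂ :=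
  Matrix.fromRows ((s • 1 - A.map Complex.ofReal)⁻¹ * B.map Complex.ofReal) 1

lemma mapMul {a b c : ℕ} (P : Matrix (Fin a) (Fin b) ℝ) (Q : Matrix (Fin b) (Fin c) ℝ) :
    (P * Q).map Complex.ofReal = P.map Complex.ofReal * Q.map Complex.ofReal :=
  Matrix.map_mul (f := Complex.ofRealHom)

lemma mapSub {a b : ℕ} (P Q : Matrix (Fin a) (Fin b) ℝ) :
    (P - Q).map Complex.ofReal = P.map Complex.ofReal - Q.map Complex.ofReal := by
  ext i j; simp

lemma mapAdd {a b : ℕ} (P Q : Matrix (Fin a) (Fin b) ℝ) :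
    (P + Q).map Complex.ofReal = P.map Complex.ofReal + Q.map Complex.ofReal := by
  ext i j; simp

lemma mapNeg {a b : ℕ} (P : Matrix (Fin a) (Fin b) ℝ) :
    (-P).map Complex.ofReal = -(P.map Complex.ofReal) := by
  ext i j; simp

lemma mapT {a b : ℕ} (P : Matrix (Fin a) (Fin b) ℝ) :
    (Pᵀ).map Complex.ofReal = (P.map Complex.ofReal)ᵀ := rfl

lemma popov_core {n m : Type*} [Fintype n] [Fintype m] [DecidableEq n] [DecidableEq m]
    (M N Mi Ni X' : Matrix n n ℂ) (B' : Matrix n m ℂ) (C' : Matrix m n ℂ)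
    (D' : Matrix m m ℂ) (hM : M * Mi = 1) (hN : N * Ni = 1) :
    C' * Mi * B' + D' + (C' * Ni * B' + D')ᵀ =
      ((Ni * B')ᵀ * (Nᵀ * X' + X' * M) + (1 : Matrix m m ℂ)ᵀ * (C' - B'ᵀ * X')) * (Mi * B') +
        ((Ni * B')ᵀ * (C'ᵀ - X' * B') + (1 : Matrix m m ℂ)ᵀ * (D' + D'ᵀ)) * (1 : Matrix m m ℂ) := by
  have f1 : ∀ Y : Matrix n m ℂ, Niᵀ * (Nᵀ * Y) = Y := fun Y => by
    rw [← Matrix.mul_assoc, ← Matrix.transpose_mul, hN, Matrix.transpose_one, Matrix.one_mul]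
  have f2 : ∀ Y : Matrix n m ℂ, M * (Mi * Y) = Y := fun Y => by
    rw [← Matrix.mul_assoc, hM, Matrix.one_mul]
  simp only [Matrix.transpose_mul, Matrix.transpose_add, Matrix.transpose_one, Matrix.one_mul,
    Matrix.mul_one, Matrix.add_mul, Matrix.sub_mul, Matrix.mul_add, Matrix.mul_sub,
    Matrix.mul_assoc, f1, f2]
  abel

/-- Factorization of the Popov function `Φ(s) = G(s) + G(-s)ᵀ` via the KYP matrix `W(X)`,
for an arbitrary symmetric matrix `X`. -/
theorem popov_factorization {n m : ℕ} (A : Matrix (Fin n) (Fin n) ℝ)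
    (B : Matrix (Fin n) (Fin m) ℝ) (C : Matrix (Fin m) (Fin n) ℝ)
    (D : Matrix (Fin m) (Fin m) ℝ) (X : Matrix (Fin n) (Fin n) ℝ) (hX : Xᵀ = X)
    (s : ℂ) (h1 : IsUnit (s • 1 - A.map Complex.ofReal))
    (h2 : IsUnit ((-s) • 1 - A.map Complex.ofReal)) :
    transferFun A B C D s + (transferFun A B C D (-s))ᵀ =
      (stackT A B (-s))ᵀ * (KYP A B C D X).map Complex.ofReal * stackT A B s := by
  have hM : (s • 1 - A.map Complex.ofReal) * (s • 1 - A.map Complex.ofReal)⁻¹ = 1 :=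
    mul_nonsing_inv _ ((isUnit_iff_isUnit_det _).mp h1)
  have hN : ((-s) • 1 - A.map Complex.ofReal) * ((-s) • 1 - A.map Complex.ofReal)⁻¹ = 1 :=
    mul_nonsing_inv _ ((isUnit_iff_isUnit_det _).mp h2)
  have key : ((-s) • 1 - A.map Complex.ofReal)ᵀ * X.map Complex.ofReal +
      X.map Complex.ofReal * (s • 1 - A.map Complex.ofReal) =
      -((A.map Complex.ofReal)ᵀ * X.map Complex.ofReal) -
        X.map Complex.ofReal * A.map Complex.ofReal := by
    simp [sub_mul, mul_sub, transpose_smul, Matrix.smul_mul, Matrix.mul_smul,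
      Matrix.transpose_sub, Matrix.transpose_smul, Matrix.transpose_one]
    abel
  have hmaps : (KYP A B C D X).map Complex.ofReal =
      Matrix.fromBlocks
        (((-s) • 1 - A.map Complex.ofReal)ᵀ * X.map Complex.ofReal +
          X.map Complex.ofReal * (s • 1 - A.map Complex.ofReal))
        ((C.map Complex.ofReal)ᵀ - X.map Complex.ofReal * B.map Complex.ofReal)
        (C.map Complex.ofReal - (B.map Complex.ofReal)ᵀ * X.map Complex.ofReal)
        (D.map Complex.ofReal + (D.map Complex.ofReal)ᵀ) := by
    rw [key, KYP, Matrix.fromBlocks_map]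
    simp [mapMul, mapSub, mapAdd, mapNeg, mapT]
  rw [hmaps, transferFun, transferFun, stackT, stackT, transpose_fromRows,
    fromCols_mul_fromBlocks, fromCols_mul_fromRows]
  exact popov_core _ _ _ _ _ _ _ _ hM hN
end

section
/- Suppose the system is port-Hamiltonian: there exist Q, J, R ∈ ℝ^{n×n}, G₀, P ∈ ℝ^{n×m}, S, N ∈ ℝ^{m×m} with Q symmetric positive definite, Jᵀ = −J, Nᵀ = −N, the block matrix [[R, P], [Pᵀ, S]] symmetric positive semidefinite, and A = (J − R)Q, B = G₀ − P, C = (G₀ + P)ᵀQ, D = S + N. Then the KYP matrix satisfies W(Q) = 2 · [[Q, 0], [0, I_m]] · [[R, P], [Pᵀ, S]] · [[Q, 0], [0, I_m]], and consequently W(Q) is positive semidefinite; i.e., Q solves the KYP inequality W(Q) ⪰ 0. -/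
open Matrix

/-- For a port-Hamiltonian system, the Hamiltonian `Q` solves the KYP inequality:
`W(Q) = 2 diag(Q, I) [[R, P], [Pᵀ, S]] diag(Q, I) ⪰ 0`. -/
theorem pH_solves_KYP {n m : ℕ} (A : Matrix (Fin n) (Fin n) ℝ)
    (B : Matrix (Fin n) (Fin m) ℝ) (C : Matrix (Fin m) (Fin n) ℝ)
    (D : Matrix (Fin m) (Fin m) ℝ)
    (Q J R : Matrix (Fin n) (Fin n) ℝ) (G₀ P : Matrix (Fin n) (Fin m) ℝ)
    (S N : Matrix (Fin m) (Fin m) ℝ)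
    (hQ : Q.PosDef) (hQsym : Qᵀ = Q)
    (hJ : Jᵀ = -J) (hN : Nᵀ = -N)
    (hRPS : (Matrix.fromBlocks R P Pᵀ S).PosSemidef)
    (hA : A = (J - R) * Q) (hB : B = G₀ - P) (hC : C = (G₀ + P)ᵀ * Q)
    (hD : D = S + N) :
    KYP A B C D Q =
        (2 : ℝ) • (Matrix.fromBlocks Q 0 0 1 * Matrix.fromBlocks R P Pᵀ S *
          Matrix.fromBlocks Q 0 0 1) ∧
      (KYP A B C D Q).PosSemidef := by
  have hHerm := hRPS.isHermitian
  rw [Matrix.IsHermitian, Matrix.conjTranspose_eq_transpose_of_trivial,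
    Matrix.fromBlocks_transpose, Matrix.transpose_transpose] at hHerm
  have hR : Rᵀ = R := congrArg Matrix.toBlocks₁₁ hHerm
  have hS : Sᵀ = S := congrArg Matrix.toBlocks₂₂ hHerm
  have key : KYP A B C D Q =
      (2 : ℝ) • (Matrix.fromBlocks Q 0 0 1 * Matrix.fromBlocks R P Pᵀ S *
        Matrix.fromBlocks Q 0 0 1) := by
    subst hA hB hC hD
    unfold KYP
    rw [Matrix.fromBlocks_multiply, Matrix.fromBlocks_multiply, Matrix.fromBlocks_smul]
    simp only [Matrix.zero_mul, Matrix.mul_zero, Matrix.mul_one, Matrix.one_mul,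
      add_zero, zero_add]
    have b11 : -(((J - R) * Q)ᵀ * Q) - Q * ((J - R) * Q) = (2 : ℝ) • (Q * R * Q) := by
      simp only [Matrix.transpose_mul, Matrix.transpose_sub, hQsym, hJ, hR, two_smul,
        Matrix.sub_mul, Matrix.mul_sub, Matrix.neg_mul]
      noncomm_ring
    have b12 : ((G₀ + P)ᵀ * Q)ᵀ - Q * (G₀ - P) = (2 : ℝ) • (Q * P) := by
      simp only [Matrix.transpose_mul, Matrix.transpose_transpose, hQsym, two_smul,
        Matrix.mul_sub, Matrix.mul_add]
      abel
    have b21 : (G₀ + P)ᵀ * Q - (G₀ - P)ᵀ * Q = (2 : ℝ) • (Pᵀ * Q) := by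
      simp only [Matrix.transpose_sub, Matrix.transpose_add, Matrix.sub_mul,
        Matrix.add_mul, two_smul]
      abel
    have b22 : S + N + (S + N)ᵀ = (2 : ℝ) • S := by
      simp only [Matrix.transpose_add, hS, hN, two_smul]
      abel
    rw [b11, b12, b21, b22]
  refine ⟨key, ?_⟩
  rw [key, two_smul]
  have hsym : (Matrix.fromBlocks Q 0 0 (1 : Matrix (Fin m) (Fin m) ℝ))ᴴ =
      Matrix.fromBlocks Q 0 0 1 := by
    rw [Matrix.conjTranspose_eq_transpose_of_trivial, Matrix.fromBlocks_transpose]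
    simp [hQsym]
  have h1 : (Matrix.fromBlocks Q 0 0 1 * Matrix.fromBlocks R P Pᵀ S *
      Matrix.fromBlocks Q 0 0 (1 : Matrix (Fin m) (Fin m) ℝ)).PosSemidef := by
    have := hRPS.mul_mul_conjTranspose_same
      (Matrix.fromBlocks Q 0 0 1 : Matrix (Fin n ⊕ Fin m) (Fin n ⊕ Fin m) ℝ)
    rwa [hsym] at this
  exact h1.add h1
end

section
/- Suppose X ∈ ℝ^{n×n} is symmetric positive definite and the KYP matrix W(X) is positive semidefinite. Define J := (1/2)(AX⁻¹ − X⁻¹Aᵀ), R := −(1/2)(AX⁻¹ + X⁻¹Aᵀ), G₀ := (1/2)(X⁻¹Cᵀ + B), P := (1/2)(X⁻¹Cᵀ − B), S := (1/2)(D + Dᵀ), N := (1/2)(D − Dᵀ). Then: (i) A = (J − R)X, B = G₀ − P, C = (G₀ + P)ᵀX, D = S + N; (ii) Jᵀ = −J and Nᵀ = −N; and (iii) the block matrix [[R, P], [Pᵀ, S]] is symmetric positive semidefinite. In other words, every symmetric positive definite solution of the KYP inequality yields a port-Hamiltonian representation of the system. -/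
open Matrix

lemma posSemidef_smul_aux {k : Type*} [Fintype k] {M : Matrix k k ℝ} (hM : M.PosSemidef)
    {c : ℝ} (hc : 0 ≤ c) : (c • M).PosSemidef := by
  refine ⟨?_, fun x => ?_⟩
  · have := hM.1
    unfold Matrix.IsHermitian at this ⊢
    rw [conjTranspose_smul, this]
    simp
  · have h := hM.2 x
    have h2 := mul_nonneg hc h
    simp only [Finsupp.mul_sum, star_trivial, Matrix.smul_apply, smul_eq_mul] at h2 ⊢
    exact le_of_le_of_eq h2 (Finsupp.sum_congr fun i _ => Finsupp.sum_congr fun j _ => by ring)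

/-- Every symmetric positive definite solution of the KYP inequality yields a
port-Hamiltonian representation of the system. -/
theorem KYP_solution_gives_pH {n m : ℕ} (A : Matrix (Fin n) (Fin n) ℝ)
    (B : Matrix (Fin n) (Fin m) ℝ) (C : Matrix (Fin m) (Fin n) ℝ)
    (D : Matrix (Fin m) (Fin m) ℝ) (X : Matrix (Fin n) (Fin n) ℝ)
    (hX : X.PosDef) (hXsym : Xᵀ = X) (hW : (KYP A B C D X).PosSemidef) :
    let J := (1 / 2 : ℝ) • (A * X⁻¹ - X⁻¹ * Aᵀ)
    let R := -((1 / 2 : ℝ) • (A * X⁻¹ + X⁻¹ * Aᵀ))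
    let G₀ := (1 / 2 : ℝ) • (X⁻¹ * Cᵀ + B)
    let P := (1 / 2 : ℝ) • (X⁻¹ * Cᵀ - B)
    let S := (1 / 2 : ℝ) • (D + Dᵀ)
    let N := (1 / 2 : ℝ) • (D - Dᵀ)
    (A = (J - R) * X ∧ B = G₀ - P ∧ C = (G₀ + P)ᵀ * X ∧ D = S + N) ∧
      (Jᵀ = -J ∧ Nᵀ = -N) ∧
      (Matrix.fromBlocks R P Pᵀ S).PosSemidef := by
  intro J R G₀ P S N
  have hdet : IsUnit X.det := isUnit_iff_ne_zero.mpr hX.det_pos.ne'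
  have hXinv : X⁻¹ * X = 1 := Matrix.nonsing_inv_mul X hdet
  have hinvX : X * X⁻¹ = 1 := Matrix.mul_nonsing_inv X hdet
  have hXinvsym : (X⁻¹)ᵀ = X⁻¹ := by
    rw [Matrix.transpose_nonsing_inv, hXsym]
  refine ⟨⟨?_, ?_, ?_, ?_⟩, ⟨?_, ?_⟩, ?_⟩
  · show A = (J - R) * X
    have : J - R = A * X⁻¹ := by
      simp only [J, R, sub_neg_eq_add, ← smul_add]
      module
    rw [this, Matrix.mul_assoc, hXinv, Matrix.mul_one]
  · show B = G₀ - P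
    simp only [G₀, P, ← smul_sub]
    module
  · show C = (G₀ + P)ᵀ * X
    have h1 : G₀ + P = X⁻¹ * Cᵀ := by
      simp only [G₀, P, ← smul_add]
      module
    rw [h1, Matrix.transpose_mul, hXinvsym, Matrix.transpose_transpose,
      Matrix.mul_assoc, hXinv, Matrix.mul_one]
  · show D = S + N
    simp only [S, N, ← smul_add]
    module
  · show Jᵀ = -J
    simp only [J, Matrix.transpose_smul, Matrix.transpose_sub, Matrix.transpose_mul,
      hXinvsym, Matrix.transpose_transpose]
    module
  · show Nᵀ = -N
    simp only [N, Matrix.transpose_smul, Matrix.transpose_sub, Matrix.transpose_transpose]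
    module
  · set T : Matrix (Fin n ⊕ Fin m) (Fin n ⊕ Fin m) ℝ :=
      Matrix.fromBlocks X⁻¹ 0 0 1 with hT
    have hTH : Tᴴ = T := by
      rw [hT, Matrix.fromBlocks_conjTranspose]
      congr 1 <;> simp [Matrix.conjTranspose_eq_transpose_of_trivial, hXinvsym]
    have key : Matrix.fromBlocks R P Pᵀ S = (1 / 2 : ℝ) • (Tᴴ * KYP A B C D X * T) := by
      rw [hTH, hT]
      simp only [KYP, Matrix.fromBlocks_multiply, Matrix.zero_mul, Matrix.mul_zero,
        Matrix.one_mul, Matrix.mul_one, add_zero, zero_add, Matrix.fromBlocks_smul]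
      refine Matrix.fromBlocks_inj.mpr ⟨?_, ?_, ?_, ?_⟩
      · rw [Matrix.mul_sub, Matrix.sub_mul]
        simp only [Matrix.mul_neg, Matrix.neg_mul]
        rw [show X⁻¹ * (Aᵀ * X) * X⁻¹ = X⁻¹ * Aᵀ by
            rw [Matrix.mul_assoc, Matrix.mul_assoc, hinvX, Matrix.mul_one],
          show X⁻¹ * (X * A) * X⁻¹ = A * X⁻¹ by
            rw [← Matrix.mul_assoc, hXinv, Matrix.one_mul]]
        simp only [R]
        module
      · rw [Matrix.mul_sub, ← Matrix.mul_assoc, hXinv, Matrix.one_mul]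
      · rw [Matrix.sub_mul, Matrix.mul_assoc, hinvX, Matrix.mul_one]
        simp only [P, Matrix.transpose_smul, Matrix.transpose_sub, Matrix.transpose_mul,
          hXinvsym, Matrix.transpose_transpose]
      · rfl
    rw [key]
    exact posSemidef_smul_aux (hW.conjTranspose_mul_mul_same T) (by norm_num)
end

section
/- Suppose there exists a symmetric matrix X ∈ ℝ^{n×n} such that the KYP matrix W(X) is positive semidefinite. Then the system is positive real: for every ω ∈ ℝ such that iωI_n − A is invertible, the complex matrix Φ(iω) = G(iω) + G(iω)* is Hermitian positive semidefinite, where G(iω)* denotes the conjugate transpose. (Here one uses that, since A, B, C, D are real, G(−iω)ᵀ = G(iω)*.) -/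
open Matrix ComplexOrder

namespace KYPaux

lemma map_psd {ι : Type*} [Fintype ι] [DecidableEq ι] {W : Matrix ι ι ℝ}
    (h : W.PosSemidef) : (W.map Complex.ofReal).PosSemidef := by
  obtain ⟨L, rfl⟩ : ∃ L : Matrix ι ι ℝ, W = Lᴴ * L := by
    open scoped MatrixOrder in
    obtain ⟨L, hL, -, hLe⟩ := CFC.exists_sqrt_of_isSelfAdjoint_of_quasispectrumRestricts
      h.isHermitian (QuasispectrumRestricts.nnreal_of_nonneg (Matrix.nonneg_iff_posSemidef.mpr h))
    exact ⟨L, by rw [← hLe]; congr 1; exact hL.symm⟩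
  have h1 : (Lᴴ * L).map Complex.ofReal
      = (L.map Complex.ofReal)ᴴ * L.map Complex.ofReal := by
    rw [show (Complex.ofReal : ℝ → ℂ) = Complex.ofRealHom from rfl,
      Matrix.map_mul]
    congr 1
    rw [← Matrix.conjTranspose_map]
    intro a; simp [Complex.conj_ofReal]
  rw [h1]
  exact Matrix.posSemidef_conjTranspose_mul_self _

lemma ct_dot {a b : Type*} [Fintype a] [Fintype b] (M : Matrix a b ℂ)
    (v : b → ℂ) (w : a → ℂ) : star v ⬝ᵥ (Mᴴ *ᵥ w) = star (M *ᵥ v) ⬝ᵥ w := by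
  rw [star_mulVec, dotProduct_mulVec]

lemma real_ct {a b : Type*} (M : Matrix a b ℝ) :
    (M.map Complex.ofReal)ᵀ = (M.map Complex.ofReal)ᴴ := by
  ext i j; simp [Complex.conj_ofReal]

end KYPaux

/-- A solvable KYP inequality implies positive realness: `Φ(iω) = G(iω) + G(iω)*` is
Hermitian positive semidefinite whenever `iω I - A` is invertible. -/
theorem KYP_implies_positive_real {n m : ℕ} (A : Matrix (Fin n) (Fin n) ℝ)
    (B : Matrix (Fin n) (Fin m) ℝ) (C : Matrix (Fin m) (Fin n) ℝ)
    (D : Matrix (Fin m) (Fin m) ℝ)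
    (hX : ∃ X : Matrix (Fin n) (Fin n) ℝ, Xᵀ = X ∧ (KYP A B C D X).PosSemidef) :
    ∀ ω : ℝ, IsUnit ((Complex.I * ω) • 1 - A.map Complex.ofReal) →
      (transferFun A B C D (Complex.I * ω) +
        (transferFun A B C D (Complex.I * ω))ᴴ).PosSemidef := by
  obtain ⟨X, hXs, hW⟩ := hX
  intro ω hU
  set s : ℂ := Complex.I * ω with hs_def
  have hs : star s = -s := by
    rw [hs_def]; simp
  set Ac := A.map Complex.ofReal with hAc
  set Bc := B.map Complex.ofReal with hBc
  set Cc := C.map Complex.ofReal with hCc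
  set Dc := D.map Complex.ofReal with hDc
  set Xc := X.map Complex.ofReal with hXc
  set M := s • (1 : Matrix (Fin n) (Fin n) ℂ) - Ac with hM_def
  set G := transferFun A B C D s with hG_def
  have hG : G = Cc * M⁻¹ * Bc + Dc := rfl
  refine posSemidef_iff_dotProduct_mulVec.mpr ⟨?_, ?_⟩
  · show (G + Gᴴ)ᴴ = G + Gᴴ
    rw [conjTranspose_add, conjTranspose_conjTranspose, add_comm]
  intro u
  set x := M⁻¹ *ᵥ (Bc *ᵥ u) with hx
  have hMx : M *ᵥ x = Bc *ᵥ u := by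
    rw [hx, mulVec_mulVec, Matrix.mul_nonsing_inv _
      ((Matrix.isUnit_iff_isUnit_det _).mp hU), one_mulVec]
  have hAx : Ac *ᵥ x = s • x - Bc *ᵥ u := by
    rw [← hMx, hM_def, sub_mulVec, smul_mulVec, one_mulVec]; abel
  have hWc := KYPaux.map_psd hW
  have hWeq : (KYP A B C D X).map Complex.ofReal =
      Matrix.fromBlocks (-(Acᵀ * Xc) - Xc * Ac) (Ccᵀ - Xc * Bc)
        (Cc - Bcᵀ * Xc) (Dc + Dcᵀ) := by
    unfold KYP
    ext i j
    rcases i with i | i <;> rcases j with j | j <;>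
      simp [Matrix.fromBlocks, Matrix.map_apply, Matrix.mul_apply,
        Matrix.transpose_apply, Matrix.sub_apply, Matrix.add_apply, Matrix.neg_apply,
        hAc, hBc, hCc, hDc, hXc]
  have hq := (posSemidef_iff_dotProduct_mulVec.mp hWc).2 (Sum.elim x u)
  rw [hWeq] at hq
  have key : star (Sum.elim x u) ⬝ᵥ
      (Matrix.fromBlocks (-(Acᵀ * Xc) - Xc * Ac) (Ccᵀ - Xc * Bc)
        (Cc - Bcᵀ * Xc) (Dc + Dcᵀ) *ᵥ Sum.elim x u)
      = star u ⬝ᵥ ((G + Gᴴ) *ᵥ u) := by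
    have hGu : G *ᵥ u = Cc *ᵥ x + Dc *ᵥ u := by
      rw [hG, add_mulVec, hx, ← mulVec_mulVec, ← mulVec_mulVec]
    rw [add_mulVec, dotProduct_add, KYPaux.ct_dot, hGu, Function.star_sumElim,
      fromBlocks_mulVec, sumElim_dotProduct_sumElim]
    simp only [sub_mulVec, add_mulVec, neg_mulVec, ← mulVec_mulVec,
      dotProduct_add, dotProduct_sub, dotProduct_neg,
      Sum.elim_comp_inl, Sum.elim_comp_inr,
      (show Acᵀ = Acᴴ from KYPaux.real_ct A), (show Bcᵀ = Bcᴴ from KYPaux.real_ct B),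
      (show Ccᵀ = Ccᴴ from KYPaux.real_ct C), (show Dcᵀ = Dcᴴ from KYPaux.real_ct D),
      KYPaux.ct_dot, hAx]
    simp only [Matrix.mulVec_smul, Matrix.mulVec_sub, star_sub, star_smul,
      sub_dotProduct, smul_dotProduct, dotProduct_smul, star_add, add_dotProduct,
      dotProduct_sub, smul_eq_mul, hs, ← hBc, ← hCc, ← hDc]
    ring
  rw [key] at hq
  exact hq
end

section
/- Suppose X ∈ ℝ^{n×n} is symmetric positive semidefinite and the KYP matrix W(X) is positive semidefinite. Let u : ℝ → ℝ^m be continuous, let x : ℝ → ℝ^n be differentiable with x′(t) = A x(t) + B u(t) for all t, and set y(t) = C x(t) + D u(t). Then the storage function H(x) := (1/2) xᵀXx satisfies the dissipation inequality: for all t₀ ≤ t₁, (1/2) x(t₁)ᵀ X x(t₁) − (1/2) x(t₀)ᵀ X x(t₀) ≤ ∫_{t₀}^{t₁} y(τ)ᵀ u(τ) dτ. In particular, a solution of the KYP inequality makes the system passive. -/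
open Matrix MeasureTheory

lemma mulVec_cont {n m : ℕ} (A : Matrix (Fin n) (Fin m) ℝ) {x : ℝ → Fin m → ℝ}
    (hx : Continuous x) : Continuous fun t => A.mulVec (x t) :=
  (A.mulVecLin.continuous_of_finiteDimensional).comp hx

lemma dot_cont {k : ℕ} {v w : ℝ → Fin k → ℝ} (hv : Continuous v) (hw : Continuous w) :
    Continuous fun t => v t ⬝ᵥ w t := by
  simp only [dotProduct]
  exact continuous_finset_sum _ fun i _ =>
    ((continuous_apply i).comp hv).mul ((continuous_apply i).comp hw)

/-- A positive semidefinite solution of the KYP inequality yields the quadratic storage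
function `H(x) = ½ xᵀ X x` satisfying the dissipation inequality, i.e., the system is
passive. -/
theorem KYP_implies_passive {n m : ℕ} (A : Matrix (Fin n) (Fin n) ℝ)
    (B : Matrix (Fin n) (Fin m) ℝ) (C : Matrix (Fin m) (Fin n) ℝ)
    (D : Matrix (Fin m) (Fin m) ℝ) (X : Matrix (Fin n) (Fin n) ℝ)
    (hX : X.PosSemidef) (hW : (KYP A B C D X).PosSemidef)
    (u : ℝ → Fin m → ℝ) (x : ℝ → Fin n → ℝ) (y : ℝ → Fin m → ℝ)
    (hu : Continuous u)
    (hx : ∀ t : ℝ, HasDerivAt x (A.mulVec (x t) + B.mulVec (u t)) t)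
    (hy : ∀ t : ℝ, y t = C.mulVec (x t) + D.mulVec (u t)) :
    ∀ t₀ t₁ : ℝ, t₀ ≤ t₁ →
      (1 / 2) * (x t₁ ⬝ᵥ X.mulVec (x t₁)) - (1 / 2) * (x t₀ ⬝ᵥ X.mulVec (x t₀)) ≤
        ∫ τ in t₀..t₁, y τ ⬝ᵥ u τ := by
  intro t₀ t₁ ht
  have hsym : ∀ i j, X j i = X i j := by
    intro i j
    conv_lhs => rw [← hX.1]
    simp [conjTranspose_apply]
  set f : ℝ → Fin n → ℝ := fun t => A.mulVec (x t) + B.mulVec (u t) with hf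
  have hxc : Continuous x := by
    have : Differentiable ℝ x := fun t => (hx t).differentiableAt
    exact this.continuous
  have hfc : Continuous f := (mulVec_cont A hxc).add (mulVec_cont B hu)
  -- derivative of H
  set g : ℝ → ℝ := fun t => f t ⬝ᵥ X.mulVec (x t) with hg
  have hgc : Continuous g := dot_cont hfc (mulVec_cont X hxc)
  have hH : ∀ t, HasDerivAt (fun t => (1 / 2) * (x t ⬝ᵥ X.mulVec (x t))) (g t) t := by
    intro t
    have hxi : ∀ i, HasDerivAt (fun t => x t i) (f t i) t := fun i =>
      hasDerivAt_pi.mp (hx t) i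
    have h1 : HasDerivAt (fun t => x t ⬝ᵥ X.mulVec (x t))
        (∑ i, ∑ j, (f t i * (X i j * x t j) + x t i * (X i j * f t j))) t := by
      have : ∀ t', x t' ⬝ᵥ X.mulVec (x t') = ∑ i, ∑ j, x t' i * (X i j * x t' j) := by
        intro t'
        simp [dotProduct, mulVec, Finset.mul_sum]
      simp only [this]
      exact HasDerivAt.fun_sum fun i _ => HasDerivAt.fun_sum fun j _ =>
        (hxi i).mul ((HasDerivAt.const_mul (X i j) (hxi j)))
    have key : (1 / 2 : ℝ) * (∑ i, ∑ j, (f t i * (X i j * x t j) + x t i * (X i j * f t j)))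
        = g t := by
      have swap : (∑ i, ∑ j, x t i * (X i j * f t j)) = ∑ i, ∑ j, f t i * (X i j * x t j) := by
        rw [Finset.sum_comm]
        refine Finset.sum_congr rfl fun j _ => Finset.sum_congr rfl fun i _ => ?_
        rw [hsym j i]; ring
      rw [Finset.sum_congr rfl fun i _ => Finset.sum_add_distrib, Finset.sum_add_distrib, swap]
      simp [hg, dotProduct, mulVec, Finset.mul_sum]
      ring
    rw [← key]
    exact h1.const_mul (1 / 2 : ℝ)
  -- pointwise dissipation inequality
  have hdis : ∀ t, g t ≤ y t ⬝ᵥ u t := by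
    intro t
    have h0 := hW.dotProduct_mulVec_nonneg (Sum.elim (x t) (u t))
    simp only [KYP, fromBlocks_mulVec, star_trivial] at h0
    have hel : (Sum.elim (x t) (u t) ∘ Sum.inl) = x t := rfl
    have her : (Sum.elim (x t) (u t) ∘ Sum.inr) = u t := rfl
    rw [hel, her, sumElim_dotProduct_sumElim] at h0
    have e1 : x t ⬝ᵥ ((-(Aᵀ * X) - X * A) *ᵥ x t + (Cᵀ - X * B) *ᵥ u t)
        = -(A *ᵥ x t ⬝ᵥ X *ᵥ x t) - (A *ᵥ x t ⬝ᵥ X *ᵥ x t)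
          + C *ᵥ x t ⬝ᵥ u t - B *ᵥ u t ⬝ᵥ X *ᵥ x t := by
      have hXsymm : Xᵀ = X := by ext i j; simp [transpose_apply, hsym]
      rw [dotProduct_add, sub_mulVec, sub_mulVec, neg_mulVec, dotProduct_sub, dotProduct_sub,
        dotProduct_neg]
      rw [← mulVec_mulVec, ← mulVec_mulVec, ← mulVec_mulVec]
      rw [dotProduct_mulVec (x t) Aᵀ, vecMul_transpose]
      rw [dotProduct_mulVec (x t) X (A *ᵥ x t), ← hXsymm, vecMul_transpose, hXsymm,
        dotProduct_comm (X *ᵥ x t)]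
      rw [dotProduct_mulVec (x t) Cᵀ, vecMul_transpose]
      rw [dotProduct_mulVec (x t) X (B *ᵥ u t), ← hXsymm, vecMul_transpose, hXsymm,
        dotProduct_comm (X *ᵥ x t)]
      ring
    have e2 : u t ⬝ᵥ ((C - Bᵀ * X) *ᵥ x t + (D + Dᵀ) *ᵥ u t)
        = C *ᵥ x t ⬝ᵥ u t - B *ᵥ u t ⬝ᵥ X *ᵥ x t + (D *ᵥ u t ⬝ᵥ u t) + (D *ᵥ u t ⬝ᵥ u t) := by
      rw [dotProduct_add, sub_mulVec, add_mulVec, dotProduct_sub, dotProduct_add]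
      rw [← mulVec_mulVec]
      rw [dotProduct_comm (u t) (C *ᵥ x t)]
      rw [dotProduct_mulVec (u t) Bᵀ, vecMul_transpose]
      rw [dotProduct_comm (u t) (D *ᵥ u t)]
      rw [dotProduct_mulVec (u t) Dᵀ, vecMul_transpose]
      ring
    rw [e1, e2] at h0
    have : g t = A *ᵥ x t ⬝ᵥ X *ᵥ x t + B *ᵥ u t ⬝ᵥ X *ᵥ x t := by
      simp [hg, hf, add_dotProduct]
    have hyu : y t ⬝ᵥ u t = C *ᵥ x t ⬝ᵥ u t + D *ᵥ u t ⬝ᵥ u t := by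
      rw [hy t, add_dotProduct]
    rw [this, hyu]
    linarith
  -- integrate
  have hFTC : (1 / 2) * (x t₁ ⬝ᵥ X.mulVec (x t₁)) - (1 / 2) * (x t₀ ⬝ᵥ X.mulVec (x t₀))
      = ∫ τ in t₀..t₁, g τ := by
    exact (intervalIntegral.integral_eq_sub_of_hasDerivAt (fun t _ => hH t)
      (hgc.intervalIntegrable t₀ t₁)).symm
  rw [hFTC]
  have hyuc : Continuous fun τ => y τ ⬝ᵥ u τ := by
    have : Continuous y := by
      have : y = fun t => C.mulVec (x t) + D.mulVec (u t) := funext hy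
      rw [this]
      exact (mulVec_cont C hxc).add (mulVec_cont D hu)
    exact dot_cont this hu
  exact intervalIntegral.integral_mono_on ht (hgc.intervalIntegrable t₀ t₁)
    (hyuc.intervalIntegrable t₀ t₁) (fun τ _ => hdis τ)
end

section
/- (Spectral factorization of the Popov function.) Suppose X ∈ ℝ^{n×n} is symmetric, L ∈ ℝ^{k×n}, M ∈ ℝ^{k×m}, and the KYP matrix factorizes as W(X) = [L, M]ᵀ[L, M], where [L, M] ∈ ℝ^{k×(n+m)} is the horizontal concatenation. Define the spectral factor H(s) = M + L(sI_n − A)⁻¹B. Then for every s ∈ ℂ such that both sI_n − A and −sI_n − A are invertible (entries cast to ℂ), H(−s)ᵀ H(s) = G(s) + G(−s)ᵀ, where ᵀ denotes the (non-conjugate) transpose. -/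
open Matrix

lemma map_mul' {p q r : ℕ} (P : Matrix (Fin p) (Fin q) ℝ) (Q : Matrix (Fin q) (Fin r) ℝ) :
    (P * Q).map Complex.ofReal = P.map Complex.ofReal * Q.map Complex.ofReal := by
  ext i j
  simp [Matrix.mul_apply, Matrix.map_apply]

/-- Spectral factorization of the Popov function: if `W(X) = [L, M]ᵀ [L, M]`, then the
spectral factor `H(s) = M + L (sI - A)⁻¹ B` satisfies `H(-s)ᵀ H(s) = G(s) + G(-s)ᵀ`. -/
theorem spectral_factorization {n m k : ℕ} (A : Matrix (Fin n) (Fin n) ℝ)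
    (B : Matrix (Fin n) (Fin m) ℝ) (C : Matrix (Fin m) (Fin n) ℝ)
    (D : Matrix (Fin m) (Fin m) ℝ) (X : Matrix (Fin n) (Fin n) ℝ)
    (L : Matrix (Fin k) (Fin n) ℝ) (M : Matrix (Fin k) (Fin m) ℝ)
    (hXsym : Xᵀ = X)
    (hfac : KYP A B C D X = (Matrix.fromCols L M)ᵀ * Matrix.fromCols L M) :
    ∀ s : ℂ, IsUnit (s • 1 - A.map Complex.ofReal) →
      IsUnit ((-s) • 1 - A.map Complex.ofReal) →
      (transferFun A B L M (-s))ᵀ * transferFun A B L M s =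
        transferFun A B C D s + (transferFun A B C D (-s))ᵀ := by
  intro s hPu hQu
  rw [transpose_fromCols, fromRows_mul_fromCols, KYP, fromBlocks_inj] at hfac
  obtain ⟨h11, h12, h21, h22⟩ := hfac
  set a := A.map Complex.ofReal with ha
  set b := B.map Complex.ofReal with hb
  set c := C.map Complex.ofReal with hc
  set d := D.map Complex.ofReal with hd
  set x := X.map Complex.ofReal with hx
  set l := L.map Complex.ofReal with hl
  set mm := M.map Complex.ofReal with hmm
  set P := s • (1 : Matrix (Fin n) (Fin n) ℂ) - a with hPdef
  set Q := (-s) • (1 : Matrix (Fin n) (Fin n) ℂ) - a with hQdef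
  have hxs : xᵀ = x := by rw [hx, ← Matrix.transpose_map, hXsym]
  have hll : lᵀ * l = -(aᵀ * x) - x * a := by
    have := congrArg (fun Z => Z.map Complex.ofReal) h11
    simp only [map_mul', Matrix.transpose_map] at this
    rw [hl, ← this]
    ext i j
    simp only [ha, hb, hc, hd, hx, Matrix.map_apply, Matrix.sub_apply, Matrix.neg_apply,
      Matrix.add_apply, Matrix.mul_apply, Matrix.transpose_apply]
    push_cast
    ring
  have hlm : lᵀ * mm = cᵀ - x * b := by
    have := congrArg (fun Z => Z.map Complex.ofReal) h12
    simp only [map_mul', Matrix.transpose_map] at this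
    rw [hl, hmm, ← this]
    ext i j
    simp only [ha, hb, hc, hd, hx, Matrix.map_apply, Matrix.sub_apply, Matrix.neg_apply,
      Matrix.add_apply, Matrix.mul_apply, Matrix.transpose_apply]
    push_cast
    ring
  have hml : mmᵀ * l = c - bᵀ * x := by
    have := congrArg (fun Z => Z.map Complex.ofReal) h21
    simp only [map_mul', Matrix.transpose_map] at this
    rw [hl, hmm, ← this]
    ext i j
    simp only [ha, hb, hc, hd, hx, Matrix.map_apply, Matrix.sub_apply, Matrix.neg_apply,
      Matrix.add_apply, Matrix.mul_apply, Matrix.transpose_apply]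
    push_cast
    ring
  have hmmm : mmᵀ * mm = d + dᵀ := by
    have := congrArg (fun Z => Z.map Complex.ofReal) h22
    simp only [map_mul', Matrix.transpose_map] at this
    rw [hmm, ← this]
    ext i j
    simp only [ha, hb, hc, hd, hx, Matrix.map_apply, Matrix.sub_apply, Matrix.neg_apply,
      Matrix.add_apply, Matrix.mul_apply, Matrix.transpose_apply]
    push_cast
    ring
  -- key identity
  have hll' : lᵀ * l = Qᵀ * x + x * P := by
    rw [hll, hQdef, hPdef]
    simp only [Matrix.transpose_sub, Matrix.transpose_smul, Matrix.transpose_one,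
      Matrix.sub_mul, Matrix.mul_sub, Matrix.smul_mul, Matrix.mul_smul, Matrix.one_mul,
      Matrix.mul_one, neg_smul, Matrix.transpose_neg, Matrix.neg_mul]
    abel
  have hPd : IsUnit P.det := (Matrix.isUnit_iff_isUnit_det P).mp hPu
  have hQd : IsUnit Q.det := (Matrix.isUnit_iff_isUnit_det Q).mp hQu
  have hQtd : IsUnit Qᵀ.det := by rwa [Matrix.det_transpose]
  have hQt : (Q⁻¹)ᵀ = (Qᵀ)⁻¹ := Matrix.transpose_nonsing_inv Q
  simp only [transferFun, ← ha, ← hb, ← hc, ← hd, ← hl, ← hmm, ← hPdef, ← hQdef]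
  rw [Matrix.transpose_add, Matrix.transpose_mul, Matrix.transpose_mul, hQt,
    Matrix.transpose_add, Matrix.transpose_mul, Matrix.transpose_mul, hQt]
  rw [Matrix.add_mul, Matrix.mul_add, Matrix.mul_add]
  have e1 : bᵀ * (Qᵀ⁻¹ * lᵀ) * (l * P⁻¹ * b)
      = bᵀ * (x * (P⁻¹ * b)) + bᵀ * (Qᵀ⁻¹ * (x * b)) := by
    calc bᵀ * (Qᵀ⁻¹ * lᵀ) * (l * P⁻¹ * b)
        = bᵀ * (Qᵀ⁻¹ * ((lᵀ * l) * (P⁻¹ * b))) := by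
          simp only [Matrix.mul_assoc]
      _ = bᵀ * (Qᵀ⁻¹ * ((Qᵀ * x + x * P) * (P⁻¹ * b))) := by rw [hll']
      _ = bᵀ * (x * (P⁻¹ * b)) + bᵀ * (Qᵀ⁻¹ * (x * b)) := by
          rw [Matrix.add_mul]
          rw [Matrix.mul_assoc (Qᵀ) x (P⁻¹ * b), Matrix.mul_assoc x P (P⁻¹ * b),
            Matrix.mul_nonsing_inv_cancel_left P b hPd, Matrix.mul_add,
            Matrix.nonsing_inv_mul_cancel_left Qᵀ _ hQtd, Matrix.mul_add]
  have e2 : bᵀ * (Qᵀ⁻¹ * lᵀ) * mm = bᵀ * (Qᵀ⁻¹ * cᵀ) - bᵀ * (Qᵀ⁻¹ * (x * b)) := by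
    calc bᵀ * (Qᵀ⁻¹ * lᵀ) * mm = bᵀ * (Qᵀ⁻¹ * (lᵀ * mm)) := by
          simp only [Matrix.mul_assoc]
      _ = bᵀ * (Qᵀ⁻¹ * cᵀ) - bᵀ * (Qᵀ⁻¹ * (x * b)) := by
          rw [hlm, Matrix.mul_sub, Matrix.mul_sub]
  have e3 : mmᵀ * (l * P⁻¹ * b) = c * (P⁻¹ * b) - bᵀ * (x * (P⁻¹ * b)) := by
    calc mmᵀ * (l * P⁻¹ * b) = (mmᵀ * l) * (P⁻¹ * b) := by
          simp only [Matrix.mul_assoc]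
      _ = c * (P⁻¹ * b) - bᵀ * (x * (P⁻¹ * b)) := by rw [hml, Matrix.sub_mul, Matrix.mul_assoc]
  rw [e1, e2, e3, hmmm]
  simp only [Matrix.mul_assoc]
  abel
end

section
/- (Algebraic core of Theorem 3.3: the reduced-order model satisfies a positive real Lur'e equation.) Let Ã ∈ ℝ^{r×r}, B̃ ∈ ℝ^{r×m}, L̃ ∈ ℝ^{k×r}, M̃ ∈ ℝ^{k×m}, and let X̃ ∈ ℝ^{r×r} be symmetric with ÃᵀX̃ + X̃Ã + L̃ᵀL̃ = 0. Let N ∈ ℝ^{m×m} satisfy Nᵀ = −N, and define C̃ := B̃ᵀX̃ + M̃ᵀL̃ and D̃ := (1/2)M̃ᵀM̃ + N. Then the KYP matrix of (Ã, B̃, C̃, D̃) at X̃ satisfies W̃(X̃) = [[−ÃᵀX̃ − X̃Ã, C̃ᵀ − X̃B̃], [C̃ − B̃ᵀX̃, D̃ + D̃ᵀ]] = [L̃, M̃]ᵀ[L̃, M̃], and in particular W̃(X̃) is positive semidefinite, so X̃ solves the KYP inequality of the reduced system. -/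
open Matrix

/-- Algebraic core of Theorem 3.3: the reduced-order model produced by the spectral-factor
algorithm satisfies a positive real Lur'e equation, i.e., its KYP matrix factorizes as
`[L̃, M̃]ᵀ [L̃, M̃]` and is in particular positive semidefinite. -/
theorem rom_satisfies_lure {r m k : ℕ} (At : Matrix (Fin r) (Fin r) ℝ)
    (Bt : Matrix (Fin r) (Fin m) ℝ) (Lt : Matrix (Fin k) (Fin r) ℝ)
    (Mt : Matrix (Fin k) (Fin m) ℝ) (Xt : Matrix (Fin r) (Fin r) ℝ)
    (N : Matrix (Fin m) (Fin m) ℝ)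
    (hXtsym : Xtᵀ = Xt) (hLyap : Atᵀ * Xt + Xt * At + Ltᵀ * Lt = 0)
    (hN : Nᵀ = -N) :
    let Ct := Btᵀ * Xt + Mtᵀ * Lt
    let Dt := (1 / 2 : ℝ) • (Mtᵀ * Mt) + N
    Matrix.fromBlocks (-(Atᵀ * Xt) - Xt * At) (Ctᵀ - Xt * Bt) (Ct - Btᵀ * Xt)
        (Dt + Dtᵀ) =
        (Matrix.fromCols Lt Mt)ᵀ * Matrix.fromCols Lt Mt ∧
      (Matrix.fromBlocks (-(Atᵀ * Xt) - Xt * At) (Ctᵀ - Xt * Bt) (Ct - Btᵀ * Xt)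
        (Dt + Dtᵀ)).PosSemidef := by
  intro Ct Dt
  have key : Matrix.fromBlocks (-(Atᵀ * Xt) - Xt * At) (Ctᵀ - Xt * Bt) (Ct - Btᵀ * Xt)
      (Dt + Dtᵀ) = (Matrix.fromCols Lt Mt)ᵀ * Matrix.fromCols Lt Mt := by
    rw [transpose_fromCols, fromRows_mul_fromCols]
    have h11 : -(Atᵀ * Xt) - Xt * At = Ltᵀ * Lt := by
      have h := eq_neg_of_add_eq_zero_right hLyap
      rw [h]; abel
    have h12 : Ctᵀ - Xt * Bt = Ltᵀ * Mt := by
      simp only [Ct, transpose_add, transpose_mul, transpose_transpose, hXtsym]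
      abel
    have h21 : Ct - Btᵀ * Xt = Mtᵀ * Lt := by
      simp only [Ct]; abel
    have h22 : Dt + Dtᵀ = Mtᵀ * Mt := by
      simp only [Dt, transpose_add, transpose_smul, transpose_mul, transpose_transpose, hN]
      module
    rw [h11, h12, h21, h22]
  refine ⟨key, ?_⟩
  rw [key]
  have := posSemidef_conjTranspose_mul_self (Matrix.fromCols Lt Mt)
  simpa [conjTranspose_eq_transpose_of_trivial] using this
end

section
/- (Theorem 3.5: the minimal KYP solution yields the spectral factor with smallest Hankel singular values.) Let A ∈ ℝ^{n×n} have all eigenvalues with negative real part, let B ∈ ℝ^{n×m}, and let P ∈ ℝ^{n×n} be symmetric positive definite with AP + PAᵀ + BBᵀ = 0 and Cholesky-type factorization P = FFᵀ with F ∈ ℝ^{n×n} invertible. Let L ∈ ℝ^{k×n} and L̂ ∈ ℝ^{k̂×n}, and let X, X̂ ∈ ℝ^{n×n} be symmetric with AᵀX + XA + LᵀL = 0 and AᵀX̂ + X̂A + L̂ᵀL̂ = 0, and assume X ≤ X̂ (i.e., X̂ − X is positive semidefinite). Then: (i) F⁻¹(PX)F = FᵀXF and F⁻¹(PX̂)F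 = FᵀX̂F, so the eigenvalues of PX and PX̂ are the (real, nonnegative) eigenvalues of the symmetric matrices FᵀXF and FᵀX̂F; and (ii) for every index 1 ≤ j ≤ n, the j-th largest eigenvalue of FᵀXF is less than or equal to the j-th largest eigenvalue of FᵀX̂F. Consequently, the j-th Hankel singular value σ_j = √(λ_j(PX)) of the spectral factor (A, B, L, ·) is at most the j-th Hankel singular value of the spectral factor (A, B, L̂, ·). -/
open Matrix

open Classical in
/-- The eigenvalues of a real symmetric matrix listed in decreasing order
(`eigsDesc S j` is the `(j+1)`-th largest eigenvalue); junk value `0` if `S` is not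
symmetric. -/
noncomputable def eigsDesc {n : ℕ} (S : Matrix (Fin n) (Fin n) ℝ) : Fin n → ℝ :=
  if h : S.IsHermitian then fun j => (h.eigenvalues ∘ Tuple.sort h.eigenvalues) j.rev
  else 0

section AuxWeyl

open scoped RealInnerProductSpace

private lemma dot_eq_inner {n : ℕ} (v w : EuclideanSpace ℝ (Fin n)) : ⟪v, w⟫ = ⇑v ⬝ᵥ ⇑w := by
  simp [PiLp.inner_apply, dotProduct, RCLike.inner_apply, mul_comm]

private lemma rayleigh_lower {n : ℕ} (S : Matrix (Fin n) (Fin n) ℝ) (hSsym : Sᵀ = S)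
    (b : OrthonormalBasis (Fin n) ℝ (EuclideanSpace ℝ (Fin n)))
    (μ : Fin n → ℝ) (hb : ∀ j, S *ᵥ ⇑(b j) = μ j • ⇑(b j))
    (s : Finset (Fin n)) (c : ℝ) (hc : ∀ j ∈ s, c ≤ μ j)
    (v : EuclideanSpace ℝ (Fin n)) (hv : ∀ j ∉ s, ⟪b j, v⟫ = 0) :
    c * ⟪v, v⟫ ≤ ⇑v ⬝ᵥ (S *ᵥ ⇑v) := by
  set w : EuclideanSpace ℝ (Fin n) := (WithLp.equiv 2 _).symm (S *ᵥ ⇑v) with hwdef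
  have hw : ⇑w = S *ᵥ ⇑v := rfl
  have key : ∀ j : Fin n, ⟪b j, w⟫ = μ j * ⟪b j, v⟫ := by
    intro j
    rw [dot_eq_inner, dot_eq_inner, hw]
    calc ⇑(b j) ⬝ᵥ (S *ᵥ ⇑v) = (Sᵀ *ᵥ ⇑(b j)) ⬝ᵥ ⇑v := by
          rw [dotProduct_mulVec, mulVec_transpose]
      _ = μ j * (⇑(b j) ⬝ᵥ ⇑v) := by rw [hSsym, hb j, smul_dotProduct]; rfl
  have expand : ⇑v ⬝ᵥ (S *ᵥ ⇑v) = ∑ j, μ j * ⟪b j, v⟫ ^ 2 := by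
    rw [← hw, ← dot_eq_inner, ← b.sum_inner_mul_inner v w]
    refine Finset.sum_congr rfl fun j _ => ?_
    rw [key j, real_inner_comm v (b j)]; ring
  have expand2 : ⟪v, v⟫ = ∑ j, ⟪b j, v⟫ ^ 2 := by
    rw [← b.sum_inner_mul_inner v v]
    refine Finset.sum_congr rfl fun j _ => ?_
    rw [real_inner_comm v (b j)]; ring
  rw [expand, expand2, Finset.mul_sum]
  have h0 : ∀ j ∈ Finset.univ, j ∉ s → μ j * ⟪b j, v⟫ ^ 2 = 0 := fun j _ hj => by rw [hv j hj]; ring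
  have h0' : ∀ j ∈ Finset.univ, j ∉ s → c * ⟪b j, v⟫ ^ 2 = 0 := fun j _ hj => by rw [hv j hj]; ring
  rw [← Finset.sum_subset s.subset_univ h0, ← Finset.sum_subset s.subset_univ h0']
  exact Finset.sum_le_sum fun j hj => mul_le_mul_of_nonneg_right (hc j hj) (sq_nonneg _)

private lemma weyl_asc {n : ℕ} {S T : Matrix (Fin n) (Fin n) ℝ}
    (hS : S.IsHermitian) (hT : T.IsHermitian) (hST : (T - S).PosSemidef) (i : Fin n) :
    hS.eigenvalues (Tuple.sort hS.eigenvalues i) ≤ hT.eigenvalues (Tuple.sort hT.eigenvalues i) := by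
  set μ := hS.eigenvalues with hμ
  set ν := hT.eigenvalues with hν
  set p := Tuple.sort μ with hp
  set q := Tuple.sort ν with hq
  set bS := hS.eigenvectorBasis with hbS
  set bT := hT.eigenvectorBasis with hbT
  let f : EuclideanSpace ℝ (Fin n) →ₗ[ℝ]
      ((↥(Finset.Iio i) → ℝ) × (↥(Finset.Ioi i) → ℝ)) :=
    LinearMap.prod
      (LinearMap.pi fun l : ↥(Finset.Iio i) => (innerSL ℝ (bS (p l.1))).toLinearMap)
      (LinearMap.pi fun l : ↥(Finset.Ioi i) => (innerSL ℝ (bT (q l.1))).toLinearMap)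
  obtain ⟨v, hv0, hfv⟩ : ∃ v, v ≠ 0 ∧ f v = 0 := by
    by_contra hcon
    push_neg at hcon
    have hinj : Function.Injective f := by
      rw [← LinearMap.ker_eq_bot, Submodule.eq_bot_iff]
      intro x hx
      by_contra hx0
      exact hcon x hx0 hx
    have hle := LinearMap.finrank_le_finrank_of_injective hinj
    rw [finrank_euclideanSpace_fin, Module.finrank_prod] at hle
    simp only [Module.finrank_pi, Fintype.card_coe, Fin.card_Iio, Fin.card_Ioi] at hle
    omega
  have hfv1 : ∀ l : Fin n, l < i → ⟪bS (p l), v⟫ = 0 := by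
    intro l hl
    have := congrArg Prod.fst hfv
    exact congrFun this ⟨l, Finset.mem_Iio.mpr hl⟩
  have hfv2 : ∀ l : Fin n, i < l → ⟪bT (q l), v⟫ = 0 := by
    intro l hl
    have := congrArg Prod.snd hfv
    exact congrFun this ⟨l, Finset.mem_Ioi.mpr hl⟩
  have hvpos : (0:ℝ) < ⟪v, v⟫ := by
    rw [real_inner_self_eq_norm_sq]; exact pow_pos (norm_pos_iff.mpr hv0) 2
  have hlow : μ (p i) * ⟪v, v⟫ ≤ ⇑v ⬝ᵥ (S *ᵥ ⇑v) := by
    refine rayleigh_lower S (by simpa using hS : S.IsSymm) bS μ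
      (fun j => hS.mulVec_eigenvectorBasis j) ((Finset.Ici i).image ⇑p) (μ (p i)) ?_ v ?_
    · intro j hj
      obtain ⟨l, hl, rfl⟩ := Finset.mem_image.mp hj
      exact Tuple.monotone_sort μ (Finset.mem_Ici.mp hl)
    · intro j hj
      have hlt : p.symm j < i := by
        by_contra hge
        exact hj (Finset.mem_image.mpr ⟨p.symm j, Finset.mem_Ici.mpr (not_lt.mp hge),
          p.apply_symm_apply j⟩)
      simpa [p.apply_symm_apply] using hfv1 (p.symm j) hlt
  have hupp : ⇑v ⬝ᵥ (T *ᵥ ⇑v) ≤ ν (q i) * ⟪v, v⟫ := by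
    have h := rayleigh_lower (-T) (by simp [show Tᵀ = T from (by simpa using hT : T.IsSymm)]) bT (fun j => -ν j)
      (fun j => by rw [neg_mulVec, hT.mulVec_eigenvectorBasis]; module)
      ((Finset.Iic i).image ⇑q) (-ν (q i)) ?_ v ?_
    · rw [neg_mulVec, dotProduct_neg] at h
      nlinarith
    · intro j hj
      obtain ⟨l, hl, rfl⟩ := Finset.mem_image.mp hj
      exact neg_le_neg (Tuple.monotone_sort ν (Finset.mem_Iic.mp hl))
    · intro j hj
      have hlt : i < q.symm j := by
        by_contra hge
        exact hj (Finset.mem_image.mpr ⟨q.symm j, Finset.mem_Iic.mpr (not_lt.mp hge),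
          q.apply_symm_apply j⟩)
      simpa [q.apply_symm_apply] using hfv2 (q.symm j) hlt
  have hmid : ⇑v ⬝ᵥ (S *ᵥ ⇑v) ≤ ⇑v ⬝ᵥ (T *ᵥ ⇑v) := by
    have h := hST.dotProduct_mulVec_nonneg ⇑v
    rw [sub_mulVec, dotProduct_sub] at h
    simpa using h
  have : μ (p i) * ⟪v, v⟫ ≤ ν (q i) * ⟪v, v⟫ := le_trans hlow (le_trans hmid hupp)
  exact le_of_mul_le_mul_right this hvpos

end AuxWeyl

section AuxLyap

open Filter

attribute [local instance] Matrix.linftyOpNormedRing Matrix.linftyOpNormedAlgebra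

private lemma spec_cayley {n : ℕ} (Ac : Matrix (Fin n) (Fin n) ℂ)
    (hstab : ∀ μ ∈ spectrum ℂ Ac, μ.re < 0) (hU : IsUnit (Ac - 1))
    {μ : ℂ} (hμ : μ ∈ spectrum ℂ ((Ac + 1) * (Ac - 1)⁻¹)) : ‖μ‖ < 1 := by
  have hUdet : IsUnit (Ac - 1).det := (Matrix.isUnit_iff_isUnit_det _).mp hU
  have hGU : IsUnit (Ac - 1)⁻¹ :=
    ⟨⟨(Ac - 1)⁻¹, Ac - 1, Matrix.nonsing_inv_mul _ hUdet, Matrix.mul_nonsing_inv _ hUdet⟩, rfl⟩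
  rw [spectrum.mem_iff] at hμ
  have hfact : algebraMap ℂ (Matrix (Fin n) (Fin n) ℂ) μ - (Ac + 1) * (Ac - 1)⁻¹
      = (μ • (Ac - 1) - (Ac + 1)) * (Ac - 1)⁻¹ := by
    rw [sub_mul, smul_mul_assoc, Matrix.mul_nonsing_inv _ hUdet,
      Algebra.algebraMap_eq_smul_one]
  rw [hfact] at hμ
  have hM : ¬ IsUnit (μ • (Ac - 1) - (Ac + 1)) := fun h => hμ (h.mul hGU)
  have hμ1 : μ ≠ 1 := by
    rintro rfl
    apply hM
    have : (1:ℂ) • (Ac - 1) - (Ac + 1) = (-2 : ℂ) • (1 : Matrix (Fin n) (Fin n) ℂ) := by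
      module
    rw [this, ← Algebra.algebraMap_eq_smul_one]
    exact (isUnit_iff_ne_zero.mpr (by norm_num)).map (algebraMap ℂ _)
  set lam : ℂ := (μ + 1) / (μ - 1) with hlam
  have hμm1 : μ - 1 ≠ 0 := sub_ne_zero.mpr hμ1
  have hMfact : μ • (Ac - 1) - (Ac + 1) = ((μ - 1) • (1 : Matrix (Fin n) (Fin n) ℂ)) *
      (Ac - lam • 1) := by
    rw [smul_mul_assoc, one_mul, hlam]
    match_scalars
    · ring
    · field_simp
      ring
  have hlamspec : lam ∈ spectrum ℂ Ac := by
    rw [spectrum.mem_iff]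
    intro h
    apply hM
    rw [hMfact]
    refine IsUnit.mul ?_ ?_
    · rw [← Algebra.algebraMap_eq_smul_one]
      exact (isUnit_iff_ne_zero.mpr hμm1).map (algebraMap ℂ _)
    · rw [← IsUnit.neg_iff, neg_sub]
      rwa [Algebra.algebraMap_eq_smul_one] at h
  have hre := hstab lam hlamspec
  have hlam1 : lam - 1 ≠ 0 := by
    intro h
    rw [sub_eq_zero] at h
    rw [h] at hre
    norm_num at hre
  have hμval : μ = (lam + 1) / (lam - 1) := by
    rw [hlam]
    field_simp
    ring
  have hsq : ‖lam + 1‖ ^ 2 < ‖lam - 1‖ ^ 2 := by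
    rw [Complex.sq_norm, Complex.sq_norm,
      Complex.normSq_apply, Complex.normSq_apply]
    simp only [Complex.add_re, Complex.add_im, Complex.sub_re, Complex.sub_im,
      Complex.one_re, Complex.one_im]
    nlinarith
  have hlt : ‖lam + 1‖ < ‖lam - 1‖ := by
    nlinarith [norm_nonneg (lam + 1), norm_nonneg (lam - 1)]
  rw [hμval, norm_div, div_lt_one (norm_pos_iff.mpr hlam1)]
  exact hlt

private lemma pow_norm_tendsto_zero {n : ℕ} (Dc : Matrix (Fin n) (Fin n) ℂ) (hn : 0 < n)
    (hspec : ∀ μ ∈ spectrum ℂ Dc, ‖μ‖ < 1) :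
    Tendsto (fun K : ℕ => ‖Dc ^ K‖) atTop (nhds 0) := by
  haveI : Nonempty (Fin n) := ⟨⟨0, hn⟩⟩
  haveI : Nontrivial (Matrix (Fin n) (Fin n) ℂ) := by
    refine nontrivial_of_ne 1 0 fun h => ?_
    have := congrFun (congrFun h ⟨0, hn⟩) ⟨0, hn⟩
    simp [Matrix.one_apply] at this
  have hρ : spectralRadius ℂ Dc < 1 := by
    have := spectrum.spectralRadius_lt_of_forall_lt Dc
      (r := 1) (fun z hz => by exact_mod_cast hspec z hz)
    simpa using this
  obtain ⟨r, hr1, hr2⟩ := ENNReal.lt_iff_exists_nnreal_btwn.mp hρ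
  have H := spectrum.pow_nnnorm_pow_one_div_tendsto_nhds_spectralRadius Dc
  have hev : ∀ᶠ K : ℕ in atTop, (‖Dc ^ K‖₊ : ENNReal) ^ (1 / (K:ℝ)) < (r : ENNReal) :=
    H.eventually_lt_const hr1
  have hle : ∀ᶠ K : ℕ in atTop, ‖Dc ^ K‖ ≤ (r:ℝ) ^ K := by
    filter_upwards [hev, Filter.eventually_ge_atTop 1] with K hK hK1
    have hK0 : (K:ℝ) ≠ 0 := by positivity
    have h2 := ENNReal.rpow_lt_rpow hK (show (0:ℝ) < (K:ℝ) by positivity)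
    rw [← ENNReal.rpow_mul, one_div, inv_mul_cancel₀ hK0, ENNReal.rpow_one,
      ENNReal.rpow_natCast, ← ENNReal.coe_pow, ENNReal.coe_lt_coe] at h2
    calc ‖Dc ^ K‖ = ((‖Dc ^ K‖₊ : NNReal) : ℝ) := rfl
      _ ≤ ((r ^ K : NNReal) : ℝ) := by exact_mod_cast h2.le
      _ = (r:ℝ) ^ K := by push_cast; ring
  have hr2' : (r:ℝ) < 1 := by exact_mod_cast hr2
  exact squeeze_zero' (Filter.Eventually.of_forall fun K => norm_nonneg _) hle
    (tendsto_pow_atTop_nhds_zero_of_lt_one r.coe_nonneg hr2')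

private lemma lyap_psd {n k : ℕ} (A : Matrix (Fin n) (Fin n) ℝ) (X : Matrix (Fin n) (Fin n) ℝ)
    (L : Matrix (Fin k) (Fin n) ℝ)
    (hstab : ∀ μ ∈ spectrum ℂ (A.map Complex.ofReal), μ.re < 0)
    (hXsym : Xᵀ = X) (hXLyap : Aᵀ * X + X * A + Lᵀ * L = 0) : X.PosSemidef := by
  have hherm : X.IsHermitian := by
    rw [Matrix.IsHermitian, Matrix.conjTranspose_eq_transpose_of_trivial]
    exact hXsym
  rcases Nat.eq_zero_or_pos n with hn | hn
  · subst hn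
    exact PosSemidef.of_dotProduct_mulVec_nonneg hherm fun x => by simp [dotProduct]
  -- setup
  set φ := (Complex.ofRealHom.mapMatrix : Matrix (Fin n) (Fin n) ℝ →+* Matrix (Fin n) (Fin n) ℂ)
    with hφ
  have hAmap : A.map Complex.ofReal = φ A := rfl
  -- A - 1 is invertible
  have hU : IsUnit (A - 1) := by
    rw [Matrix.isUnit_iff_isUnit_det]
    by_contra h
    have hdet : (A - 1).det = 0 := by simpa [isUnit_iff_ne_zero] using h
    have hdetC : (φ A - 1).det = 0 := by
      have : φ A - 1 = φ (A - 1) := by rw [map_sub, _root_.map_one]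
      rw [this, ← RingHom.map_det, hdet, map_zero]
    have hmem : (1 : ℂ) ∈ spectrum ℂ (A.map Complex.ofReal) := by
      rw [spectrum.mem_iff, hAmap, _root_.map_one, ← neg_sub, IsUnit.neg_iff,
        Matrix.isUnit_iff_isUnit_det, isUnit_iff_ne_zero]
      simpa using hdetC
    have := hstab 1 hmem
    norm_num at this
  have hUdet : IsUnit (A - 1).det := (Matrix.isUnit_iff_isUnit_det _).mp hU
  set G := (A - 1)⁻¹ with hG
  set D := (A + 1) * G with hD
  have hGA : (A - 1) * G = 1 := Matrix.mul_nonsing_inv _ hUdet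
  have hAG : G * (A - 1) = 1 := Matrix.nonsing_inv_mul _ hUdet
  have hLyap' : Aᵀ * X + X * A = -(Lᵀ * L) := by
    rw [eq_neg_iff_add_eq_zero]; exact hXLyap
  -- the key identity
  have hbr : (A-1)ᵀ * X * (A-1) - (A+1)ᵀ * X * (A+1) = Lᵀ * L + Lᵀ * L := by
    have e : (A-1)ᵀ * X * (A-1) - (A+1)ᵀ * X * (A+1)
        = -(Aᵀ * X + X * A) + -(Aᵀ * X + X * A) := by
      simp only [transpose_sub, transpose_add, transpose_one]
      noncomm_ring
    rw [e, hLyap', neg_neg]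
  have h1 : Gᵀ * ((A - 1)ᵀ * X * (A - 1)) * G = X := by
    calc Gᵀ * ((A - 1)ᵀ * X * (A - 1)) * G
        = (Gᵀ * (A - 1)ᵀ) * X * ((A - 1) * G) := by
          simp only [Matrix.mul_assoc]
      _ = X := by rw [← transpose_mul, hGA, transpose_one, one_mul, mul_one]
  have h2 : Dᵀ * X * D = Gᵀ * ((A + 1)ᵀ * X * (A + 1)) * G := by
    rw [hD, transpose_mul]
    simp only [Matrix.mul_assoc]
  have hkey : X - Dᵀ * X * D = (L * G)ᵀ * (L * G) + (L * G)ᵀ * (L * G) := by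
    rw [h2]
    nth_rewrite 1 [← h1]
    rw [← Matrix.sub_mul, ← Matrix.mul_sub, hbr]
    simp only [transpose_mul, Matrix.mul_add, Matrix.add_mul, Matrix.mul_assoc]
  -- quadratic form decreases along D
  have hquad : ∀ (m : ℕ) (M : Matrix (Fin m) (Fin n) ℝ) (x : Fin n → ℝ),
      x ⬝ᵥ ((Mᵀ * M) *ᵥ x) = (M *ᵥ x) ⬝ᵥ (M *ᵥ x) := by
    intro m M x
    rw [← Matrix.mulVec_mulVec, Matrix.dotProduct_mulVec x Mᵀ, Matrix.vecMul_transpose]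
  have hDform : ∀ x : Fin n → ℝ,
      x ⬝ᵥ ((Dᵀ * X * D) *ᵥ x) = (D *ᵥ x) ⬝ᵥ (X *ᵥ (D *ᵥ x)) := by
    intro x
    rw [Matrix.mul_assoc, ← Matrix.mulVec_mulVec, Matrix.dotProduct_mulVec x Dᵀ,
      Matrix.vecMul_transpose]
    simp only [← Matrix.mulVec_mulVec]
  have hdec : ∀ x : Fin n → ℝ, (D *ᵥ x) ⬝ᵥ (X *ᵥ (D *ᵥ x)) ≤ x ⬝ᵥ (X *ᵥ x) := by
    intro x
    have h3 : 0 ≤ x ⬝ᵥ ((X - Dᵀ * X * D) *ᵥ x) := by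
      rw [hkey, Matrix.add_mulVec, dotProduct_add, hquad]
      have : (0:ℝ) ≤ ((L * G) *ᵥ x) ⬝ᵥ ((L * G) *ᵥ x) :=
        Finset.sum_nonneg fun i _ => mul_self_nonneg _
      linarith
    rw [Matrix.sub_mulVec, dotProduct_sub, hDform] at h3
    linarith
  have hiter : ∀ (K : ℕ) (x : Fin n → ℝ),
      ((D ^ K) *ᵥ x) ⬝ᵥ (X *ᵥ ((D ^ K) *ᵥ x)) ≤ x ⬝ᵥ (X *ᵥ x) := by
    intro K
    induction K with
    | zero => intro x; simp
    | succ K ih =>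
      intro x
      have hstep : D ^ (K + 1) *ᵥ x = D ^ K *ᵥ (D *ᵥ x) := by
        rw [Matrix.mulVec_mulVec, ← pow_succ]
      rw [hstep]
      exact le_trans (ih (D *ᵥ x)) (hdec x)
  -- the complex Cayley transform has spectrum in the open unit disc
  have hUC : IsUnit (φ A - 1) := by
    have : φ A - 1 = φ (A - 1) := by rw [map_sub, _root_.map_one]
    rw [this, Matrix.isUnit_iff_isUnit_det, ← RingHom.map_det]
    exact hUdet.map Complex.ofRealHom
  have hGC : (φ A - 1)⁻¹ = φ G := by
    apply Matrix.inv_eq_right_inv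
    have : φ A - 1 = φ (A - 1) := by rw [map_sub, _root_.map_one]
    rw [this, ← _root_.map_mul, hGA, _root_.map_one]
  have hDC : φ D = (φ A + 1) * (φ A - 1)⁻¹ := by
    rw [hGC, hD, _root_.map_mul, map_add, _root_.map_one]
  have hspec : ∀ μ ∈ spectrum ℂ (φ D), ‖μ‖ < 1 := by
    intro μ hμ
    refine spec_cayley (φ A) ?_ hUC ?_
    · intro ν hν
      exact hstab ν (by rwa [hAmap])
    · rwa [hDC] at hμ
  -- norms of real and complex powers agree
  have hnf : ∀ M : Matrix (Fin n) (Fin n) ℝ, ‖φ M‖ = ‖M‖ := by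
    intro M
    rw [← coe_nnnorm, ← coe_nnnorm]
    congr 1
    rw [Matrix.linfty_opNNNorm_def, Matrix.linfty_opNNNorm_def]
    congr 1
    funext i
    refine Finset.sum_congr rfl fun j _ => ?_
    simp [hφ, RingHom.mapMatrix_apply, Matrix.map_apply]
  have hD0 : Filter.Tendsto (fun K : ℕ => ‖D ^ K‖) Filter.atTop (nhds 0) := by
    have h := pow_norm_tendsto_zero (φ D) hn hspec
    have : (fun K : ℕ => ‖(φ D) ^ K‖) = fun K : ℕ => ‖D ^ K‖ := by
      funext K
      rw [← map_pow, hnf]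
    rwa [this] at h
  -- conclusion
  refine PosSemidef.of_dotProduct_mulVec_nonneg hherm fun x => ?_
  have hw : Filter.Tendsto (fun K : ℕ => (D ^ K) *ᵥ x) Filter.atTop (nhds 0) := by
    exact squeeze_zero_norm (fun K => Matrix.linfty_opNorm_mulVec _ _)
      (by simpa using hD0.mul_const ‖x‖)
  have hqcont : Continuous fun w : Fin n → ℝ => w ⬝ᵥ (X *ᵥ w) := by
    have : (fun w : Fin n → ℝ => w ⬝ᵥ (X *ᵥ w))
        = fun w : Fin n → ℝ => ∑ i, w i * ∑ j, X i j * w j := rfl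
    rw [this]
    exact continuous_finset_sum _ fun i _ => (continuous_apply i).mul
      (continuous_finset_sum _ fun j _ => continuous_const.mul (continuous_apply j))
  have hq0 : Filter.Tendsto (fun K : ℕ => ((D ^ K) *ᵥ x) ⬝ᵥ (X *ᵥ ((D ^ K) *ᵥ x)))
      Filter.atTop (nhds 0) := by
    have h := (hqcont.tendsto 0).comp hw
    simpa only [Function.comp_def, Matrix.mulVec_zero, dotProduct_zero, zero_dotProduct]
      using h
  have hge : (0:ℝ) ≤ x ⬝ᵥ (X *ᵥ x) :=
    le_of_tendsto hq0 (Filter.Eventually.of_forall fun K => hiter K x)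
  simpa using hge

end AuxLyap

private lemma eigsDesc_of_hermitian {n : ℕ} {S : Matrix (Fin n) (Fin n) ℝ}
    (hS : S.IsHermitian) (j : Fin n) :
    eigsDesc S j = hS.eigenvalues (Tuple.sort hS.eigenvalues j.rev) := by
  unfold eigsDesc
  rw [dif_pos hS]
  rfl

/-- Theorem 3.5: the minimal KYP solution yields the spectral factor with smallest Hankel
singular values. Here `P = FFᵀ` is the (common) controllability Gramian, and `X`, `X̂` are
the observability Gramians of the two spectral factors, with `X ≤ X̂`. Then `PX` and `PX̂`
are similar to the symmetric matrices `FᵀXF` and `FᵀX̂F`, whose decreasingly ordered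
eigenvalues are nonnegative and compare entrywise; consequently the Hankel singular values
`σ_j = √(λ_j(PX))` compare as well. -/
theorem hankel_singular_values_minimal_solution {n m k kh : ℕ}
    (A : Matrix (Fin n) (Fin n) ℝ) (B : Matrix (Fin n) (Fin m) ℝ)
    (L : Matrix (Fin k) (Fin n) ℝ) (Lh : Matrix (Fin kh) (Fin n) ℝ)
    (P F X Xh : Matrix (Fin n) (Fin n) ℝ)
    (hstab : ∀ μ ∈ spectrum ℂ (A.map Complex.ofReal), μ.re < 0)
    (hP : P.PosDef) (hPLyap : A * P + P * Aᵀ + B * Bᵀ = 0)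
    (hPF : P = F * Fᵀ) (hF : IsUnit F)
    (hXsym : Xᵀ = X) (hXhsym : Xhᵀ = Xh)
    (hXLyap : Aᵀ * X + X * A + Lᵀ * L = 0)
    (hXhLyap : Aᵀ * Xh + Xh * A + Lhᵀ * Lh = 0)
    (hle : (Xh - X).PosSemidef) :
    (F⁻¹ * (P * X) * F = Fᵀ * X * F ∧ F⁻¹ * (P * Xh) * F = Fᵀ * Xh * F) ∧
      (∀ j : Fin n,
        0 ≤ eigsDesc (Fᵀ * X * F) j ∧
        eigsDesc (Fᵀ * X * F) j ≤ eigsDesc (Fᵀ * Xh * F) j ∧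
        Real.sqrt (eigsDesc (Fᵀ * X * F) j) ≤ Real.sqrt (eigsDesc (Fᵀ * Xh * F) j)) := by
  have hFdet : IsUnit F.det := (Matrix.isUnit_iff_isUnit_det F).mp hF
  have hFinv : F⁻¹ * F = 1 := Matrix.nonsing_inv_mul F hFdet
  have hsim : ∀ Y : Matrix (Fin n) (Fin n) ℝ, F⁻¹ * (P * Y) * F = Fᵀ * Y * F := by
    intro Y
    rw [hPF]
    calc F⁻¹ * (F * Fᵀ * Y) * F = (F⁻¹ * F) * (Fᵀ * Y * F) := by
          simp only [Matrix.mul_assoc]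
      _ = Fᵀ * Y * F := by rw [hFinv, Matrix.one_mul]
  have hXpsd : X.PosSemidef := lyap_psd A X L hstab hXsym hXLyap
  have hSpsd : (Fᵀ * X * F).PosSemidef := by
    have := hXpsd.conjTranspose_mul_mul_same F
    rwa [Matrix.conjTranspose_eq_transpose_of_trivial] at this
  have hdiffpsd : ((Fᵀ * Xh * F) - (Fᵀ * X * F)).PosSemidef := by
    have h := hle.conjTranspose_mul_mul_same F
    rw [Matrix.conjTranspose_eq_transpose_of_trivial] at h
    have e : Fᵀ * (Xh - X) * F = Fᵀ * Xh * F - Fᵀ * X * F := by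
      rw [Matrix.mul_sub, Matrix.sub_mul]
    rwa [e] at h
  have hSh : (Fᵀ * X * F).IsHermitian := hSpsd.1
  have hTh : (Fᵀ * Xh * F).IsHermitian := by
    rw [Matrix.IsHermitian, Matrix.conjTranspose_eq_transpose_of_trivial,
      transpose_mul, transpose_mul, transpose_transpose, hXhsym, Matrix.mul_assoc]
  refine ⟨⟨hsim X, hsim Xh⟩, fun j => ?_⟩
  have hmono := weyl_asc hSh hTh hdiffpsd j.rev
  rw [eigsDesc_of_hermitian hSh, eigsDesc_of_hermitian hTh]
  exact ⟨hSpsd.eigenvalues_nonneg _, hmono, Real.sqrt_le_sqrt hmono⟩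
end

section
/- (Correction-term identity for projection-based reduced models, equation (3.4).) Let X ∈ ℝ^{n×n} be symmetric, L ∈ ℝ^{k×n}, M ∈ ℝ^{k×m} with C − BᵀX = MᵀL (the off-diagonal block of the Lur'e factorization). Let V, W ∈ ℝ^{n×r} satisfy WᵀV = I_r, and set Ã := WᵀAV, B̃ := WᵀB, L̃ := LV, M̃ := M. Let X̃ ∈ ℝ^{r×r} be symmetric with ÃᵀX̃ + X̃Ã + L̃ᵀL̃ = 0, and define C̃ := B̃ᵀX̃ + M̃ᵀL̃. Then C̃ = CV + Bᵀ(WX̃ − XV); i.e., the reduced output matrix produced by Algorithm 3 equals the Petrov–Galerkin projection CV plus the passivity-enforcing correction term Ĉ := Bᵀ(WX̃ − XV). -/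
open Matrix

/-- Correction-term identity for projection-based reduced models (equation (3.4)): the
reduced output matrix `C̃ = B̃ᵀX̃ + M̃ᵀL̃` produced by Algorithm 3 equals the
Petrov–Galerkin projection `CV` plus the passivity-enforcing correction term
`Ĉ = Bᵀ(WX̃ - XV)`. -/
theorem correction_term_identity {n r m k : ℕ} (A : Matrix (Fin n) (Fin n) ℝ)
    (B : Matrix (Fin n) (Fin m) ℝ) (C : Matrix (Fin m) (Fin n) ℝ)
    (X : Matrix (Fin n) (Fin n) ℝ) (L : Matrix (Fin k) (Fin n) ℝ)
    (M : Matrix (Fin k) (Fin m) ℝ)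
    (V W : Matrix (Fin n) (Fin r) ℝ) (Xt : Matrix (Fin r) (Fin r) ℝ)
    (hXsym : Xᵀ = X) (hLure : C - Bᵀ * X = Mᵀ * L)
    (hWV : Wᵀ * V = 1) (hXtsym : Xtᵀ = Xt)
    (hLyap : (Wᵀ * A * V)ᵀ * Xt + Xt * (Wᵀ * A * V) + (L * V)ᵀ * (L * V) = 0) :
    (Wᵀ * B)ᵀ * Xt + Mᵀ * (L * V) = C * V + Bᵀ * (W * Xt - X * V) := by
  have h : Mᵀ * (L * V) = C * V - Bᵀ * (X * V) := by
    rw [← Matrix.mul_assoc, ← hLure, Matrix.sub_mul, Matrix.mul_assoc]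
  rw [h, Matrix.transpose_mul, Matrix.transpose_transpose, Matrix.mul_sub]
  rw [Matrix.mul_assoc]
  abel
end

section
/- (Sylvester residual identity and invariance consequence.) Let X ∈ ℝ^{n×n} satisfy AᵀX + XA + LᵀL = 0 with L ∈ ℝ^{k×n}. Let V, W ∈ ℝ^{n×r}, set Ã := WᵀAV and L̃ := LV, and let Z ∈ ℝ^{n×r} satisfy the Sylvester equation AᵀZ + ZÃ + LᵀL̃ = 0. Then the difference E := Z − XV satisfies AᵀE + EÃ + X(VWᵀ − I_n)AV = 0. In particular, if VWᵀAV = AV (e.g., if the range of V is A-invariant and WᵀV = I_r), then XV itself solves the Sylvester equation: Aᵀ(XV) + (XV)Ã + LᵀL̃ = 0. -/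
open Matrix

/-- Sylvester residual identity and invariance consequence: if `AᵀX + XA + LᵀL = 0` and
`Z` solves the Sylvester equation `AᵀZ + ZÃ + LᵀL̃ = 0` with `Ã = WᵀAV` and `L̃ = LV`,
then `E = Z - XV` satisfies `AᵀE + EÃ + X(VWᵀ - I)AV = 0`; in particular, if
`VWᵀAV = AV`, then `XV` itself solves the Sylvester equation. -/
theorem sylvester_residual_identity {n r k : ℕ} (A : Matrix (Fin n) (Fin n) ℝ)
    (X : Matrix (Fin n) (Fin n) ℝ) (L : Matrix (Fin k) (Fin n) ℝ)
    (V W : Matrix (Fin n) (Fin r) ℝ) (Z : Matrix (Fin n) (Fin r) ℝ)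
    (hLyap : Aᵀ * X + X * A + Lᵀ * L = 0)
    (hSyl : Aᵀ * Z + Z * (Wᵀ * A * V) + Lᵀ * (L * V) = 0) :
    Aᵀ * (Z - X * V) + (Z - X * V) * (Wᵀ * A * V) +
        X * (V * Wᵀ - 1) * (A * V) = 0 ∧
      (V * Wᵀ * A * V = A * V →
        Aᵀ * (X * V) + (X * V) * (Wᵀ * A * V) + Lᵀ * (L * V) = 0) := by
  have h1 : (Aᵀ * X + X * A + Lᵀ * L) * V = 0 := by rw [hLyap]; simp
  have key : Aᵀ * (Z - X * V) + (Z - X * V) * (Wᵀ * A * V) +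
      X * (V * Wᵀ - 1) * (A * V) = 0 := by
    linear_combination (norm := (simp only [Matrix.mul_add, Matrix.add_mul, Matrix.mul_sub, Matrix.sub_mul, Matrix.mul_one, Matrix.mul_assoc, Matrix.smul_mul, Matrix.mul_smul]; abel)) hSyl - h1
  refine ⟨key, fun hinv => ?_⟩
  have h2 : X * (V * Wᵀ - 1) * (A * V) = 0 := by
    have : X * (V * Wᵀ * A * V) = X * (A * V) := by rw [hinv]
    linear_combination (norm := (simp only [Matrix.mul_add, Matrix.add_mul, Matrix.mul_sub, Matrix.sub_mul, Matrix.mul_one, Matrix.mul_assoc, Matrix.smul_mul, Matrix.mul_smul]; abel)) this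
  linear_combination (norm := (simp only [Matrix.mul_add, Matrix.add_mul, Matrix.mul_sub, Matrix.sub_mul, Matrix.mul_one, Matrix.mul_assoc, Matrix.smul_mul, Matrix.mul_smul]; abel)) hSyl - key + h2
end

section
/- (L² error estimate for the contractive (bounded real) reduced model.) Let Z, Ẑ : ℝ → ℂ^{m×m} be functions such that for every ω ∈ ℝ the matrices I_m − Z(ω) and I_m − Ẑ(ω) are invertible, and define G(ω) := (I_m − Z(ω))⁻¹(I_m + Z(ω)) and Ĝ(ω) := (I_m − Ẑ(ω))⁻¹(I_m + Ẑ(ω)). Assume c₁ := sup_{ω∈ℝ} ‖I_m − Ẑ(ω)‖₂ < ∞ and c₂ := sup_{ω∈ℝ} ‖I_m − Z(ω)‖₂ < ∞, and that ω ↦ ‖G(ω) − Ĝ(ω)‖_F² is Lebesgue integrable. Then ω ↦ ‖Z(ω) − Ẑ(ω)‖_F² is integrable and (∫_ℝ ‖Z(ω) − Ẑ(ω)‖_F² dω)^{1/2} ≤ (1/2) · c₁ · c₂ · (∫_ℝ ‖G(ω) − Ĝ(ω)‖_F² dω)^{1/2}, where ‖·‖_F is the Frobenius norm and ‖·‖₂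 the spectral norm. -/
open Matrix MeasureTheory

/-- The squared Frobenius norm of a complex matrix. -/
noncomputable def frobSq {a b : ℕ} (M : Matrix (Fin a) (Fin b) ℂ) : ℝ :=
  ∑ i, ∑ j, ‖M i j‖ ^ 2

/-- The spectral (operator 2-) norm of a complex matrix. -/
noncomputable def specNorm {a b : ℕ} (M : Matrix (Fin a) (Fin b) ℂ) : ℝ :=
  ‖LinearMap.toContinuousLinearMap (Matrix.toEuclideanLin M)‖

lemma frobSq_nonneg {a b : ℕ} (M : Matrix (Fin a) (Fin b) ℂ) : 0 ≤ frobSq M :=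
  Finset.sum_nonneg fun _ _ => Finset.sum_nonneg fun _ _ => by positivity

lemma specNorm_nonneg {a b : ℕ} (M : Matrix (Fin a) (Fin b) ℂ) : 0 ≤ specNorm M :=
  norm_nonneg _

lemma specNorm_conjTranspose {a b : ℕ} (M : Matrix (Fin a) (Fin b) ℂ) :
    specNorm Mᴴ = specNorm M := by
  unfold specNorm
  rw [Matrix.toEuclideanLin_conjTranspose_eq_adjoint,
    LinearMap.adjoint_toContinuousLinearMap]
  exact LinearIsometryEquiv.norm_map ContinuousLinearMap.adjoint _

lemma frobSq_conjTranspose {a b : ℕ} (M : Matrix (Fin a) (Fin b) ℂ) :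
    frobSq Mᴴ = frobSq M := by
  unfold frobSq
  rw [Finset.sum_comm]
  simp [Matrix.conjTranspose_apply]

lemma frobSq_comm {a b : ℕ} (M : Matrix (Fin a) (Fin b) ℂ) :
    frobSq M = ∑ j, ∑ i, ‖M i j‖ ^ 2 := Finset.sum_comm ..

lemma euclid_sq {a : ℕ} (v : EuclideanSpace ℂ (Fin a)) : ∑ i, ‖v i‖ ^ 2 = ‖v‖ ^ 2 := by
  rw [EuclideanSpace.norm_eq, Real.sq_sqrt (by positivity)]

lemma frobSq_mul_left_le {a b c : ℕ} (A : Matrix (Fin a) (Fin b) ℂ)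
    (B : Matrix (Fin b) (Fin c) ℂ) :
    frobSq (A * B) ≤ specNorm A ^ 2 * frobSq B := by
  rw [frobSq_comm, frobSq_comm B, Finset.mul_sum]
  refine Finset.sum_le_sum fun j _ => ?_
  set v : EuclideanSpace ℂ (Fin b) := (WithLp.equiv 2 _).symm (fun i => B i j) with hv
  have h1 : ∀ i, (A * B) i j = (Matrix.toEuclideanLin A v) i := by
    intro i
    rw [hv]
    simp [Matrix.toEuclideanLin_apply, Matrix.mul_apply, Matrix.mulVec, dotProduct]
  calc ∑ i, ‖(A * B) i j‖ ^ 2 = ‖Matrix.toEuclideanLin A v‖ ^ 2 := by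
        rw [← euclid_sq]; exact Finset.sum_congr rfl fun i _ => by rw [h1]
    _ ≤ (specNorm A * ‖v‖) ^ 2 := by
        have := (LinearMap.toContinuousLinearMap (Matrix.toEuclideanLin A)).le_opNorm v
        simp only [LinearMap.coe_toContinuousLinearMap'] at this
        exact pow_le_pow_left₀ (norm_nonneg _) this 2
    _ = specNorm A ^ 2 * ∑ i, ‖B i j‖ ^ 2 := by
        rw [mul_pow, ← euclid_sq]
        congr 1

lemma frobSq_mul_right_le {a b c : ℕ} (B : Matrix (Fin a) (Fin b) ℂ)
    (C : Matrix (Fin b) (Fin c) ℂ) :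
    frobSq (B * C) ≤ specNorm C ^ 2 * frobSq B := by
  calc frobSq (B * C) = frobSq ((B * C)ᴴ) := (frobSq_conjTranspose _).symm
    _ = frobSq (Cᴴ * Bᴴ) := by rw [Matrix.conjTranspose_mul]
    _ ≤ specNorm Cᴴ ^ 2 * frobSq Bᴴ := frobSq_mul_left_le _ _
    _ = specNorm C ^ 2 * frobSq B := by rw [specNorm_conjTranspose, frobSq_conjTranspose]

lemma frobSq_smul_two {a b : ℕ} (M : Matrix (Fin a) (Fin b) ℂ) :
    frobSq ((2 : ℂ) • M) = 4 * frobSq M := by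
  simp only [frobSq, Matrix.smul_apply, norm_smul, mul_pow, ← Finset.mul_sum]
  norm_num

lemma moebius_key {m : ℕ} (A B : Matrix (Fin m) (Fin m) ℂ)
    (hA : IsUnit (1 - A)) (hB : IsUnit (1 - B)) :
    (2 : ℂ) • (A - B) =
      (1 - B) * ((1 - A)⁻¹ * (1 + A) - (1 - B)⁻¹ * (1 + B)) * (1 - A) := by
  have hA' := (Matrix.isUnit_iff_isUnit_det _).mp hA
  have hB' := (Matrix.isUnit_iff_isUnit_det _).mp hB
  have e1 : (1 - A)⁻¹ * (1 + A) * (1 - A) = 1 + A := by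
    have comm : (1 + A) * (1 - A) = (1 - A) * (1 + A) := by noncomm_ring
    rw [Matrix.mul_assoc, comm, ← Matrix.mul_assoc, Matrix.nonsing_inv_mul _ hA', Matrix.one_mul]
  have e2 : (1 - B) * ((1 - B)⁻¹ * (1 + B)) = 1 + B := by
    rw [← Matrix.mul_assoc, Matrix.mul_nonsing_inv _ hB', Matrix.one_mul]
  symm
  calc (1 - B) * ((1 - A)⁻¹ * (1 + A) - (1 - B)⁻¹ * (1 + B)) * (1 - A)
      = (1 - B) * ((1 - A)⁻¹ * (1 + A) * (1 - A)) -
        (1 - B) * ((1 - B)⁻¹ * (1 + B)) * (1 - A) := by noncomm_ring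
    _ = (1 - B) * (1 + A) - (1 + B) * (1 - A) := by rw [e1, e2]
    _ = (2 : ℂ) • (A - B) := by
        rw [smul_sub, two_smul, two_smul]; noncomm_ring


lemma pointwise_bound {m : ℕ} (A B : Matrix (Fin m) (Fin m) ℂ)
    (hA : IsUnit (1 - A)) (hB : IsUnit (1 - B)) {c1 c2 : ℝ}
    (h1 : specNorm (1 - B) ≤ c1) (h2 : specNorm (1 - A) ≤ c2) :
    frobSq (A - B) ≤ (1 / 2 * c1 * c2) ^ 2 *
      frobSq ((1 - A)⁻¹ * (1 + A) - (1 - B)⁻¹ * (1 + B)) := by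
  set D := (1 - A)⁻¹ * (1 + A) - (1 - B)⁻¹ * (1 + B) with hD
  have h0 : 4 * frobSq (A - B) = frobSq ((1 - B) * D * (1 - A)) := by
    rw [← frobSq_smul_two, moebius_key A B hA hB]
  have hle : frobSq ((1 - B) * D * (1 - A)) ≤
      specNorm (1 - B) ^ 2 * (specNorm (1 - A) ^ 2 * frobSq D) := by
    calc frobSq ((1 - B) * D * (1 - A)) ≤
        specNorm (1 - A) ^ 2 * frobSq ((1 - B) * D) := frobSq_mul_right_le _ _
      _ ≤ specNorm (1 - A) ^ 2 * (specNorm (1 - B) ^ 2 * frobSq D) := by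
          gcongr
          all_goals first
            | exact frobSq_mul_left_le _ _
            | exact frobSq_nonneg _
            | exact specNorm_nonneg _
            | positivity
      _ = specNorm (1 - B) ^ 2 * (specNorm (1 - A) ^ 2 * frobSq D) := by ring
  have h1' : specNorm (1 - B) ^ 2 * (specNorm (1 - A) ^ 2 * frobSq D) ≤
      c1 ^ 2 * (c2 ^ 2 * frobSq D) := by
    gcongr
    all_goals first
      | exact frobSq_nonneg _
      | exact specNorm_nonneg _
      | exact mul_nonneg (sq_nonneg _) (frobSq_nonneg _)
      | positivity
  nlinarith [frobSq_nonneg D, frobSq_nonneg (A - B)]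

set_option maxHeartbeats 1000000 in
/-- L² error estimate for the contractive (bounded real) reduced model:
`‖Z - Ẑ‖_{L²} ≤ ½ (sup‖I - Ẑ‖₂)(sup‖I - Z‖₂) ‖G - Ĝ‖_{L²}` for the Moebius-transformed
functions `G = (I - Z)⁻¹(I + Z)` and `Ĝ = (I - Ẑ)⁻¹(I + Ẑ)`. -/
theorem l2_error_bounded_real {m : ℕ} (Z Zh : ℝ → Matrix (Fin m) (Fin m) ℂ)
    (hmeasZ : ∀ i j, Measurable fun ω => Z ω i j)
    (hmeasZh : ∀ i j, Measurable fun ω => Zh ω i j)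
    (hinvZ : ∀ ω : ℝ, IsUnit (1 - Z ω)) (hinvZh : ∀ ω : ℝ, IsUnit (1 - Zh ω))
    (hbdd1 : BddAbove (Set.range fun ω : ℝ => specNorm (1 - Zh ω)))
    (hbdd2 : BddAbove (Set.range fun ω : ℝ => specNorm (1 - Z ω)))
    (hint : Integrable (fun ω : ℝ =>
      frobSq ((1 - Z ω)⁻¹ * (1 + Z ω) - (1 - Zh ω)⁻¹ * (1 + Zh ω)))) :
    Integrable (fun ω : ℝ => frobSq (Z ω - Zh ω)) ∧
      Real.sqrt (∫ ω : ℝ, frobSq (Z ω - Zh ω)) ≤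
        (1 / 2) * (⨆ ω : ℝ, specNorm (1 - Zh ω)) * (⨆ ω : ℝ, specNorm (1 - Z ω)) *
          Real.sqrt (∫ ω : ℝ, frobSq ((1 - Z ω)⁻¹ * (1 + Z ω) -
            (1 - Zh ω)⁻¹ * (1 + Zh ω))) := by
  set c1 : ℝ := ⨆ ω : ℝ, specNorm (1 - Zh ω) with hc1
  set c2 : ℝ := ⨆ ω : ℝ, specNorm (1 - Z ω) with hc2
  have hc1b : ∀ ω, specNorm (1 - Zh ω) ≤ c1 := fun ω => le_ciSup hbdd1 ω
  have hc2b : ∀ ω, specNorm (1 - Z ω) ≤ c2 := fun ω => le_ciSup hbdd2 ω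
  have hc1nn : 0 ≤ c1 := le_trans (specNorm_nonneg _) (hc1b 0)
  have hc2nn : 0 ≤ c2 := le_trans (specNorm_nonneg _) (hc2b 0)
  set K : ℝ := 1 / 2 * c1 * c2 with hK
  have hKnn : 0 ≤ K := mul_nonneg (mul_nonneg (by norm_num) hc1nn) hc2nn
  have hpt : ∀ ω, frobSq (Z ω - Zh ω) ≤ K ^ 2 *
      frobSq ((1 - Z ω)⁻¹ * (1 + Z ω) - (1 - Zh ω)⁻¹ * (1 + Zh ω)) := fun ω =>
    pointwise_bound (Z ω) (Zh ω) (hinvZ ω) (hinvZh ω) (hc1b ω) (hc2b ω)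
  have hmeas : Measurable fun ω => frobSq (Z ω - Zh ω) := by
    unfold frobSq
    refine Finset.measurable_sum _ fun i _ => Finset.measurable_sum _ fun j _ => ?_
    exact (((hmeasZ i j).sub (hmeasZh i j)).norm).pow measurable_const
  have hint2 : Integrable (fun ω : ℝ => K ^ 2 *
      frobSq ((1 - Z ω)⁻¹ * (1 + Z ω) - (1 - Zh ω)⁻¹ * (1 + Zh ω))) := hint.const_mul _
  have hIntF : Integrable (fun ω : ℝ => frobSq (Z ω - Zh ω)) := by
    refine hint2.mono' hmeas.aestronglyMeasurable ?_
    filter_upwards with ω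
    rw [Real.norm_of_nonneg (frobSq_nonneg _)]
    exact hpt ω
  refine ⟨hIntF, ?_⟩
  have hIle : (∫ ω : ℝ, frobSq (Z ω - Zh ω)) ≤ K ^ 2 *
      ∫ ω : ℝ, frobSq ((1 - Z ω)⁻¹ * (1 + Z ω) - (1 - Zh ω)⁻¹ * (1 + Zh ω)) := by
    rw [← integral_const_mul]
    exact integral_mono hIntF hint2 hpt
  calc Real.sqrt (∫ ω : ℝ, frobSq (Z ω - Zh ω)) ≤ Real.sqrt (K ^ 2 *
        ∫ ω : ℝ, frobSq ((1 - Z ω)⁻¹ * (1 + Z ω) - (1 - Zh ω)⁻¹ * (1 + Zh ω))) :=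
      Real.sqrt_le_sqrt hIle
    _ = K * Real.sqrt (∫ ω : ℝ, frobSq ((1 - Z ω)⁻¹ * (1 + Z ω) -
        (1 - Zh ω)⁻¹ * (1 + Zh ω))) := by
      rw [Real.sqrt_mul (sq_nonneg _), Real.sqrt_sq hKnn]
    _ = _ := by rw [hK]
end
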